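/- Let R be a commutative noetherian ring and (T, F) a torsion pair in Mod-R. Then (T, F) is of finite type (i.e. F is closed under direct limits of directed systems) if and only if (T, F) is hereditary (i.e. T is closed under submodules). -/

import Mathlib

universe u

section Aux

variable {R : Type u} [CommRing R]
variable (T F : ∀ (M : Type u) [AddCommGroup M] [Module R M], Prop)

variable
    (hF : ∀ (M : Type u) [AddCommGroup M] [Module R M],
      F M ↔ ∀ (N : Type u) [AddCommGroup N] [Module R N], T N → ∀ f : N →ₗ[R] M, f = 0)
    (hT : ∀ (M : Type u) [AddCommGroup M] [Module R M],
      T M ↔ ∀ (N : Type u) [AddCommGroup N] [Module R N], F N → ∀ f : M →ₗ[R] N, f = 0)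

include hF in
theorem tp13_F_of_inj {M Y : Type u} [AddCommGroup M] [Module R M] [AddCommGroup Y] [Module R Y]
    (e : M →ₗ[R] Y) (he : Function.Injective e) (hFY : F Y) : F M := by
  rw [hF] at hFY ⊢
  intro S _ _ hTS g
  have h0 : e.comp g = 0 := hFY S hTS (e.comp g)
  ext s
  apply he
  simpa using LinearMap.congr_fun h0 s

include hF in
theorem tp13_F_equiv {M Y : Type u} [AddCommGroup M] [Module R M] [AddCommGroup Y] [Module R Y]
    (e : M ≃ₗ[R] Y) (hFM : F M) : F Y :=
  tp13_F_of_inj T F hF e.symm.toLinearMap e.symm.injective hFM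

include hT in
theorem tp13_T_of_surj {M Y : Type u} [AddCommGroup M] [Module R M] [AddCommGroup Y] [Module R Y]
    (e : M →ₗ[R] Y) (he : Function.Surjective e) (hTM : T M) : T Y := by
  rw [hT] at hTM ⊢
  intro S _ _ hFS g
  have h0 : g.comp e = 0 := hTM S hFS (g.comp e)
  ext y
  obtain ⟨m, rfl⟩ := he y
  simpa using LinearMap.congr_fun h0 m

include hT in
theorem tp13_T_equiv {M Y : Type u} [AddCommGroup M] [Module R M] [AddCommGroup Y] [Module R Y]
    (e : M ≃ₗ[R] Y) (hTM : T M) : T Y :=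
  tp13_T_of_surj T F hT e.toLinearMap e.surjective hTM

include hF in
theorem tp13_F_pi {ι : Type u} (W : ι → Type u) [∀ i, AddCommGroup (W i)] [∀ i, Module R (W i)]
    (h : ∀ i, F (W i)) : F (∀ i, W i) := by
  rw [hF]
  intro S _ _ hTS g
  refine LinearMap.ext fun s => funext fun i => ?_
  have h0 : (LinearMap.proj i).comp g = 0 := (hF _).mp (h i) S hTS _
  have := LinearMap.congr_fun h0 s
  simpa using this

include hF in
theorem tp13_F_ext {E' : Type u} [AddCommGroup E'] [Module R E'] (K : Submodule R E')
    (hFk : F ↥K) (hFq : F (E' ⧸ K)) : F E' := by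
  rw [hF]
  intro S _ _ hTS g
  have h1 : K.mkQ.comp g = 0 := (hF _).mp hFq S hTS _
  have hr : ∀ s, g s ∈ K := by
    intro s
    have := LinearMap.congr_fun h1 s
    simpa [Submodule.Quotient.mk_eq_zero] using this
  have h2 : g.codRestrict K hr = 0 := (hF _).mp hFk S hTS _
  ext s
  have := LinearMap.congr_fun h2 s
  have : g s = ((g.codRestrict K hr) s : E') := rfl
  rw [this, h2]
  rfl

include hF in
theorem tp13_F_subsingleton (M : Type u) [AddCommGroup M] [Module R M] [Subsingleton M] :
    F M := by
  rw [hF]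
  intro S _ _ hTS g
  ext s
  exact Subsingleton.elim _ _

include hF hT in
/-- Direction "hereditary implies finite type". -/
theorem tp13_finiteType_of_hereditary [IsNoetherianRing R]
    (hHer : ∀ (M : Type u) [AddCommGroup M] [Module R M] (N : Submodule R M), T M → T N)
    (ι : Type u) [Preorder ι] [IsDirected ι (· ≤ ·)] [DecidableEq ι]
    (G : ι → Type u) [∀ i, AddCommGroup (G i)] [∀ i, Module R (G i)]
    (f : ∀ i j, i ≤ j → G i →ₗ[R] G j) [DirectedSystem G fun i j h => f i j h]
    (hFG : ∀ i, F (G i)) : F (Module.DirectLimit G f) := by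
  cases isEmpty_or_nonempty ι with
  | inl h => exact tp13_F_subsingleton T F hF _
  | inr h =>
    rw [hF]
    intro S _ _ hTS g
    ext s
    set I := Ideal.torsionOf R S s with hI
    have hTQ : T (R ⧸ I) := by
      refine tp13_T_equiv T F hT
        (LinearMap.quotKerEquivRange (LinearMap.toSpanSingleton R S s)).symm ?_
      exact hHer S _ hTS
    obtain ⟨i, y, hy⟩ := Module.DirectLimit.exists_of (g s)
    obtain ⟨gen, hgen⟩ := IsNoetherian.noetherian I
    have hz : ∀ r ∈ gen, Module.DirectLimit.of R ι G f i (r • y) = 0 := by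
      intro r hr
      have hrI : r ∈ I := by rw [← hgen]; exact Submodule.subset_span hr
      have hrs : r • s = 0 := hrI
      rw [map_smul, hy, ← map_smul, hrs, map_zero]
    have hch : ∀ r : {x // x ∈ gen}, ∃ j, ∃ hij : i ≤ j, f i j hij ((r : R) • y) = 0 :=
      fun r => Module.DirectLimit.of.zero_exact (hz r r.2)
    choose jf hf1 hf2 using hch
    obtain ⟨k, hk⟩ := (insert i (Finset.image jf gen.attach)).exists_le
    have hik : i ≤ k := hk i (Finset.mem_insert_self _ _)
    set z := f i k hik y with hzdef
    have hgz : ∀ r ∈ gen, r • z = 0 := by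
      intro r hr
      have hjk : jf ⟨r, hr⟩ ≤ k := by
        refine hk _ (Finset.mem_insert_of_mem ?_)
        exact Finset.mem_image_of_mem jf (Finset.mem_attach _ _)
      calc r • z = f i k hik (r • y) := by rw [map_smul]
        _ = f (jf ⟨r, hr⟩) k hjk (f i (jf ⟨r, hr⟩) (hf1 ⟨r, hr⟩) (r • y)) := by
            rw [Module.DirectedSystem.map_map]
        _ = 0 := by rw [hf2 ⟨r, hr⟩, map_zero]
    have hIz : ∀ r ∈ I, r • z = 0 := by
      intro r hr
      rw [← hgen] at hr
      induction hr using Submodule.span_induction with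
      | mem x hx => exact hgz x hx
      | zero => rw [zero_smul]
      | add x y _ _ hx hy => rw [add_smul, hx, hy, add_zero]
      | smul c x _ hx => rw [smul_eq_mul, mul_smul, hx, smul_zero]
    have hker : I ≤ LinearMap.ker (LinearMap.toSpanSingleton R (G k) z) := by
      intro r hr
      simpa using hIz r hr
    set ψ := Submodule.liftQ I (LinearMap.toSpanSingleton R (G k) z) hker with hψdef
    have hψ : ψ = 0 := (hF (G k)).mp (hFG k) (R ⧸ I) hTQ ψ
    have hz0 : z = 0 := by
      have : ψ (Submodule.Quotient.mk (1 : R)) = z := by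
        rw [hψdef, Submodule.liftQ_apply, LinearMap.toSpanSingleton_apply, one_smul]
      rw [hψ] at this
      simpa using this.symm
    calc g s = Module.DirectLimit.of R ι G f i y := hy.symm
      _ = Module.DirectLimit.of R ι G f k z := (Module.DirectLimit.of_f).symm
      _ = 0 := by rw [hz0, map_zero]

end Aux

section Aux2

variable {R : Type u} [CommRing R]
variable (T F : ∀ (M : Type u) [AddCommGroup M] [Module R M], Prop)
variable
    (hF : ∀ (M : Type u) [AddCommGroup M] [Module R M],
      F M ↔ ∀ (N : Type u) [AddCommGroup N] [Module R N], T N → ∀ f : N →ₗ[R] M, f = 0)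

variable (tpFequiv : ∀ {M Y : Type u} [AddCommGroup M] [Module R M] [AddCommGroup Y] [Module R Y]
    (e : M ≃ₗ[R] Y), F M → F Y)

include tpFequiv in
theorem tp13_F_fractionRing
    (hlim : ∀ (ι : Type u) [Preorder ι] [IsDirected ι (· ≤ ·)] [DecidableEq ι]
      (G : ι → Type u) [∀ i, AddCommGroup (G i)] [∀ i, Module R (G i)]
      (f : ∀ i j, i ≤ j → G i →ₗ[R] G j) [DirectedSystem G fun i j h => f i j h],
      (∀ i, F (G i)) → F (Module.DirectLimit G f))
    (q : Ideal R) [q.IsPrime] (hFq : F (R ⧸ q)) :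
    F (FractionRing (R ⧸ q)) := by
  classical
  let ι : Type u := {a : R ⧸ q // a ≠ 0}
  letI : Preorder ι :=
    { le := fun s t => ∃ u : R ⧸ q, (t : R ⧸ q) = (s : R ⧸ q) * u
      le_refl := fun s => ⟨1, (mul_one _).symm⟩
      le_trans := fun s t w ⟨u, hu⟩ ⟨v, hv⟩ => ⟨u * v, by rw [hv, hu, mul_assoc]⟩ }
  haveI : IsDirected ι (· ≤ ·) :=
    ⟨fun s t => ⟨⟨(s : R ⧸ q) * t, mul_ne_zero s.2 t.2⟩, ⟨t, rfl⟩, ⟨s, mul_comm _ _⟩⟩⟩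
  haveI : Nonempty ι := ⟨⟨1, one_ne_zero⟩⟩
  let tmap : ∀ s t : ι, s ≤ t → (R ⧸ q) →ₗ[R] (R ⧸ q) := fun s t h =>
    LinearMap.mulRight R (Classical.choose h)
  have choose_eq : ∀ (s t : ι) (h : s ≤ t), (t : R ⧸ q) = (s : R ⧸ q) * Classical.choose h :=
    fun s t h => Classical.choose_spec h
  have hunit : ∀ (s : ι) (h : s ≤ s), Classical.choose h = 1 := fun s h =>
    mul_left_cancel₀ s.2 (by rw [← choose_eq s s h, mul_one])
  have hcomp : ∀ (i j k : ι) (hij : i ≤ j) (hjk : j ≤ k) (hik : i ≤ k),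
      Classical.choose hik = Classical.choose hij * Classical.choose hjk := by
    intro i j k hij hjk hik
    have e1 := choose_eq i j hij
    have e2 := choose_eq j k hjk
    have e3 := choose_eq i k hik
    refine mul_left_cancel₀ i.2 ?_
    calc (i : R ⧸ q) * Classical.choose hik = (k : R ⧸ q) := e3.symm
      _ = (j : R ⧸ q) * Classical.choose hjk := e2
      _ = ((i : R ⧸ q) * Classical.choose hij) * Classical.choose hjk :=
          congrArg (· * Classical.choose hjk) e1
      _ = (i : R ⧸ q) * (Classical.choose hij * Classical.choose hjk) := mul_assoc _ _ _
  haveI hDS : DirectedSystem (fun _ : ι => R ⧸ q) fun s t h => tmap s t h := by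
    constructor
    · intro s x
      show x * Classical.choose _ = x
      rw [hunit s, mul_one]
    · intro k j i hij hjk x
      show (x * Classical.choose hij) * Classical.choose hjk = x * Classical.choose _
      rw [hcomp i j k hij hjk (hij.trans hjk), ← mul_assoc]
  have memnzd : ∀ s : ι, (s : R ⧸ q) ∈ nonZeroDivisors (R ⧸ q) := fun s =>
    mem_nonZeroDivisors_of_ne_zero s.2
  let dd : ι → FractionRing (R ⧸ q) := fun s =>
    IsLocalization.mk' (FractionRing (R ⧸ q)) (1 : R ⧸ q) ⟨s, memnzd s⟩
  let gm : ∀ s : ι, (R ⧸ q) →ₗ[R] FractionRing (R ⧸ q) := fun s =>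
    (LinearMap.toSpanSingleton (R ⧸ q) _ (dd s)).restrictScalars R
  have gm_apply : ∀ (s : ι) (a : R ⧸ q), gm s a = algebraMap (R ⧸ q) _ a * dd s := by
    intro s a
    show a • dd s = _
    rw [Algebra.smul_def]
  have compat : ∀ (s t : ι) (hst : s ≤ t) (x : R ⧸ q), gm t (tmap s t hst x) = gm s x := by
    intro s t hst x
    have hu := choose_eq s t hst
    have hu0 : Classical.choose hst ≠ 0 := by
      intro h0
      rw [h0, mul_zero] at hu
      exact t.2 hu
    set u := Classical.choose hst with hudef
    have htm : tmap s t hst x = x * u := rfl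
    rw [htm, gm_apply, gm_apply]
    show algebraMap (R ⧸ q) _ (x * u) * IsLocalization.mk' _ (1 : R ⧸ q) ⟨t, memnzd t⟩ =
      algebraMap (R ⧸ q) _ x * IsLocalization.mk' _ (1 : R ⧸ q) ⟨s, memnzd s⟩
    rw [← IsLocalization.mk'_eq_mul_mk'_one, ← IsLocalization.mk'_eq_mul_mk'_one]
    have ht : (⟨t, memnzd t⟩ : nonZeroDivisors (R ⧸ q)) =
        ⟨s, memnzd s⟩ * ⟨u, mem_nonZeroDivisors_of_ne_zero hu0⟩ := by
      ext; exact hu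
    rw [ht]
    exact IsLocalization.mk'_cancel x ⟨s, memnzd s⟩ ⟨u, mem_nonZeroDivisors_of_ne_zero hu0⟩
  have hFDL : F (Module.DirectLimit (fun _ : ι => R ⧸ q) tmap) :=
    hlim ι (fun _ : ι => R ⧸ q) tmap (fun _ => hFq)
  let lft := Module.DirectLimit.lift R ι (fun _ : ι => R ⧸ q) tmap gm compat
  have hinj : Function.Injective lft := by
    rw [← LinearMap.ker_eq_bot, LinearMap.ker_eq_bot']
    intro w hw
    obtain ⟨s, a, rfl⟩ := Module.DirectLimit.exists_of w
    rw [Module.DirectLimit.lift_of] at hw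
    rw [gm_apply] at hw
    have hmk1 : dd s ≠ 0 := by
      intro h0
      rw [show dd s = IsLocalization.mk' (FractionRing (R ⧸ q)) (1 : R ⧸ q) ⟨s, memnzd s⟩ from rfl,
        IsLocalization.mk'_eq_zero_iff] at h0
      obtain ⟨m, hm⟩ := h0
      rw [mul_one] at hm
      exact nonZeroDivisors.ne_zero m.2 hm
    have ha : algebraMap (R ⧸ q) (FractionRing (R ⧸ q)) a = 0 := by
      rcases mul_eq_zero.mp hw with h | h
      · exact h
      · exact absurd h hmk1
    have ha0 : a = 0 := IsFractionRing.injective (R ⧸ q) (FractionRing (R ⧸ q))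
      (by rw [ha, map_zero])
    rw [ha0, map_zero]
  have hsurj : Function.Surjective lft := by
    intro x
    obtain ⟨⟨a, s⟩, hx⟩ := IsLocalization.mk'_surjective (nonZeroDivisors (R ⧸ q)) x
    have hs0 : (s : R ⧸ q) ≠ 0 := nonZeroDivisors.ne_zero s.2
    refine ⟨Module.DirectLimit.of R ι (fun _ : ι => R ⧸ q) tmap ⟨s, hs0⟩ a, ?_⟩
    rw [show lft (Module.DirectLimit.of R ι (fun _ : ι => R ⧸ q) tmap ⟨s, hs0⟩ a)
      = gm ⟨s, hs0⟩ a from Module.DirectLimit.lift_of _ _ _]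
    rw [gm_apply, ← IsLocalization.mk'_eq_mul_mk'_one]
    rw [show (⟨(⟨s, hs0⟩ : ι), memnzd ⟨s, hs0⟩⟩ : nonZeroDivisors (R ⧸ q)) = s from rfl]
    exact hx
  exact tpFequiv (LinearEquiv.ofBijective lft ⟨hinj, hsurj⟩) hFDL

end Aux2

section Aux3

variable {R : Type u} [CommRing R]
variable (T F : ∀ (M : Type u) [AddCommGroup M] [Module R M], Prop)
variable (tpFinj : ∀ {M Y : Type u} [AddCommGroup M] [Module R M] [AddCommGroup Y] [Module R Y]
    (e : M →ₗ[R] Y), Function.Injective e → F Y → F M)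
variable (tpFpi : ∀ {ι : Type u} (W : ι → Type u) [∀ i, AddCommGroup (W i)] [∀ i, Module R (W i)],
    (∀ i, F (W i)) → F (∀ i, W i))

include tpFinj tpFpi in
/-- A module killed by a prime `q` on which every `s ∉ q` acts injectively embeds in a
product of copies of the fraction field of `R⧸q`, hence lies in the torsion-free class. -/
theorem tp13_F_of_divisible (q : Ideal R) [q.IsPrime]
    (hFK : F (FractionRing (R ⧸ q)))
    (V : Type u) [AddCommGroup V] [Module R V]
    (htor : ∀ r ∈ q, ∀ v : V, r • v = 0)
    (hsinj : ∀ s : R, s ∉ q → ∀ v : V, s • v = 0 → v = 0) : F V := by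
  classical
  have hts : Module.IsTorsionBySet R V (q : Set R) := by
    intro x r
    exact htor r.1 r.2 x
  letI instA : Module (R ⧸ q) V := hts.module
  haveI : IsScalarTower R (R ⧸ q) V := Module.IsTorsionBySet.isScalarTower hts
  set K := FractionRing (R ⧸ q) with hK
  set L := LocalizedModule (nonZeroDivisors (R ⧸ q)) V with hL
  let mkl : V →ₗ[R ⧸ q] L := LocalizedModule.mkLinearMap (nonZeroDivisors (R ⧸ q)) V
  have hmkinj : Function.Injective mkl := by
    intro v w hvw
    have h0 : mkl (v - w) = 0 := by rw [map_sub, hvw, sub_self]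
    have h1 : LocalizedModule.mk (v - w) (1 : nonZeroDivisors (R ⧸ q)) =
        LocalizedModule.mk (0 : V) (1 : nonZeroDivisors (R ⧸ q)) := by
      rw [show LocalizedModule.mk (v - w) (1 : nonZeroDivisors (R ⧸ q)) = mkl (v - w) from rfl,
        h0, LocalizedModule.zero_mk]
    rw [LocalizedModule.mk_eq] at h1
    obtain ⟨u, hu⟩ := h1
    simp only [one_smul, smul_zero] at hu
    obtain ⟨su, hsu⟩ := Ideal.Quotient.mk_surjective (u : R ⧸ q)
    have hsu0 : su ∉ q := by
      intro hmem
      have : (u : R ⧸ q) = 0 := by rw [← hsu, Ideal.Quotient.eq_zero_iff_mem]; exact hmem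
      exact nonZeroDivisors.ne_zero u.2 this
    have : su • (v - w) = 0 := by
      rw [← Module.IsTorsionBySet.mk_smul hts su (v - w), hsu, ← Submonoid.smul_def, hu]
    have := hsinj su hsu0 _ this
    exact sub_eq_zero.mp this
  let bV := Module.Basis.ofVectorSpace K L
  let Φ : V →ₗ[R] (Module.Basis.ofVectorSpaceIndex K L → K) :=
    { toFun := fun v => fun b => bV.repr (mkl v) b
      map_add' := fun v w => by
        funext b
        simp [map_add]
      map_smul' := fun r v => by
        funext b
        show bV.repr (mkl (r • v)) b = r • (bV.repr (mkl v) b)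
        have h1 : r • v = (algebraMap R (R ⧸ q) r) • v := (algebraMap_smul (R ⧸ q) r v).symm
        have h2 : mkl ((algebraMap R (R ⧸ q) r) • v)
            = (algebraMap R (R ⧸ q) r) • mkl v := map_smul _ _ _
        have h3 : ((algebraMap R (R ⧸ q) r) • mkl v : L)
            = (algebraMap (R ⧸ q) K (algebraMap R (R ⧸ q) r)) • mkl v :=
          (algebraMap_smul K _ _).symm
        rw [h1, h2, h3, map_smul]
        have h4 : r • (bV.repr (mkl v) b) = (algebraMap R (R ⧸ q) r) • (bV.repr (mkl v) b) :=
          (algebraMap_smul (R ⧸ q) r _).symm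
        have h5 : (algebraMap R (R ⧸ q) r) • (bV.repr (mkl v) b)
            = (algebraMap (R ⧸ q) K (algebraMap R (R ⧸ q) r)) • (bV.repr (mkl v) b) :=
          (algebraMap_smul K _ _).symm
        rw [h4, h5]
        rw [Algebra.smul_def, Finsupp.smul_apply, smul_eq_mul, Algebra.algebraMap_self_apply] }
  have hΦinj : Function.Injective Φ := by
    intro v w hvw
    apply hmkinj
    apply bV.repr.injective
    ext b
    exact congrFun hvw b
  exact tpFinj Φ hΦinj (tpFpi _ (fun _ => hFK))

end Aux3

section Aux4

variable {R : Type u} [CommRing R]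
variable (T F : ∀ (M : Type u) [AddCommGroup M] [Module R M], Prop)
variable (tpFequiv : ∀ {M Y : Type u} [AddCommGroup M] [Module R M] [AddCommGroup Y] [Module R Y]
    (e : M ≃ₗ[R] Y), F M → F Y)
variable (tpFsing : ∀ (M : Type u) [AddCommGroup M] [Module R M] [Subsingleton M], F M)
variable (tpFext : ∀ {E' : Type u} [AddCommGroup E'] [Module R E'] (K : Submodule R E'),
    F ↥K → F (E' ⧸ K) → F E')

include tpFequiv tpFsing tpFext in
theorem tp13_F_of_essential_ext [IsNoetherianRing R]
    (hlim : ∀ (ι : Type u) [Preorder ι] [IsDirected ι (· ≤ ·)] [DecidableEq ι]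
      (G : ι → Type u) [∀ i, AddCommGroup (G i)] [∀ i, Module R (G i)]
      (f : ∀ i j, i ≤ j → G i →ₗ[R] G j) [DirectedSystem G fun i j h => f i j h],
      (∀ i, F (G i)) → F (Module.DirectLimit G f))
    (q : Ideal R) [q.IsPrime] (hFq : F (R ⧸ q))
    (tpFdiv : ∀ (V : Type u) [AddCommGroup V] [Module R V],
      (∀ r ∈ q, ∀ v : V, r • v = 0) → (∀ s : R, s ∉ q → ∀ v : V, s • v = 0 → v = 0) → F V)
    (W : Type u) [AddCommGroup W] [Module R W]
    (ε : (R ⧸ q) →ₗ[R] W) (hει : Function.Injective ε)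
    (hess : ∀ w : W, w ≠ 0 → ∃ r : R, r • w ≠ 0 ∧ r • w ∈ LinearMap.range ε) :
    F W := by
  classical
  -- (c1) every s ∉ q acts injectively on W
  have hsinjW : ∀ s : R, s ∉ q → ∀ w : W, s • w = 0 → w = 0 := by
    intro s hs w hsw
    by_contra hw0
    obtain ⟨r, hr0, c, hc⟩ := hess w hw0
    have hc0 : c ≠ 0 := by
      intro h
      rw [h, map_zero] at hc
      exact hr0 hc.symm
    have h1 : ε (s • c) = 0 := by
      rw [map_smul, hc, smul_comm, hsw, smul_zero]
    have h2 : s • c = 0 := by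
      apply hει
      rw [h1, map_zero]
    have h3 : (Ideal.Quotient.mk q s) * c = 0 := by
      rw [← h2, ← Ideal.Quotient.algebraMap_eq, ← Algebra.smul_def]
    have hs0 : (Ideal.Quotient.mk q s) ≠ 0 := by
      rw [Ne, Ideal.Quotient.eq_zero_iff_mem]
      exact hs
    rcases mul_eq_zero.mp h3 with h | h
    · exact hs0 h
    · exact hc0 h
  -- (d) every element of W is killed by a power of q
  have hnil : ∀ a ∈ q, ∀ w : W, ∃ n : ℕ, a ^ n • w = 0 := by
    intro a ha w
    have hmono : Monotone (fun n : ℕ => Ideal.torsionOf R W (a ^ n • w)) := by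
      intro m n hmn
      intro r hr
      rw [Ideal.mem_torsionOf_iff] at hr ⊢
      have : a ^ n = a ^ (n - m) * a ^ m := by
        rw [← pow_add]
        congr 1
        omega
      rw [this, mul_smul, smul_comm r, hr, smul_zero]
    obtain ⟨n, hn⟩ := monotone_stabilizes_iff_noetherian.mpr inferInstance
      ⟨fun n : ℕ => Ideal.torsionOf R W (a ^ n • w), hmono⟩
    refine ⟨n, ?_⟩
    by_contra hy0
    obtain ⟨r, hr0, c, hc⟩ := hess _ hy0
    have hac : a • c = 0 := by
      have : (Ideal.Quotient.mk q a) = 0 := Ideal.Quotient.eq_zero_iff_mem.mpr ha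
      rw [← Ideal.Quotient.algebraMap_eq] at this
      rw [← algebraMap_smul (R ⧸ q) a c, this, zero_smul]
    have h1 : r • (a ^ (n + 1) • w) = 0 := by
      have : a • (r • (a ^ n • w)) = r • (a ^ (n + 1) • w) := by
        rw [smul_comm a r, smul_smul a, ← pow_succ']
      rw [← this, ← hc, ← map_smul, hac, map_zero]
    have h2 : r ∈ Ideal.torsionOf R W (a ^ (n + 1) • w) := h1
    have hn' : Ideal.torsionOf R W (a ^ n • w) = Ideal.torsionOf R W (a ^ (n + 1) • w) :=
      hn (n + 1) (Nat.le_succ n)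
    have h3 : r ∈ Ideal.torsionOf R W (a ^ n • w) := by
      rw [hn']
      exact h2
    exact hr0 h3
  have hpow : ∀ w : W, ∃ n : ℕ, ∀ a ∈ (q ^ n : Ideal R), a • w = 0 := by
    intro w
    have hrad : q ≤ (Ideal.torsionOf R W w).radical := by
      intro a ha
      obtain ⟨n, hn⟩ := hnil a ha w
      exact ⟨n, hn⟩
    obtain ⟨n, hn⟩ := Ideal.exists_radical_pow_le_of_fg (Ideal.torsionOf R W w)
      (IsNoetherian.noetherian _)
    refine ⟨n, fun a haq => ?_⟩
    have : a ∈ Ideal.torsionOf R W w := hn (Ideal.pow_right_mono hrad n haq)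
    exact this
  -- the filtration by powers of q
  set Ek : ℕ → Submodule R W := fun n => Submodule.torsionBySet R W ((q ^ n : Ideal R) : Set R)
    with hEk
  have hEkmem : ∀ (n : ℕ) (w : W), w ∈ Ek n ↔ ∀ a ∈ (q ^ n : Ideal R), a • w = 0 := by
    intro n w
    simp only [hEk, Submodule.mem_torsionBySet_iff, Subtype.forall, SetLike.mem_coe]
  have hEkmono : Monotone Ek := by
    intro m n hmn w hw
    rw [hEkmem] at hw ⊢
    intro a ha
    exact hw a (Ideal.pow_le_pow_right hmn ha)
  -- F (Ek n) by induction
  have hFEk : ∀ n : ℕ, F ↥(Ek n) := by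
    intro n
    induction n with
    | zero =>
      haveI : Subsingleton ↥(Ek 0) := by
        constructor
        rintro ⟨x, hx⟩ ⟨y, hy⟩
        rw [hEkmem] at hx hy
        have hx0 : x = 0 := by simpa using hx 1 (by simp)
        have hy0 : y = 0 := by simpa using hy 1 (by simp)
        exact Subtype.ext (hx0.trans hy0.symm)
      exact tpFsing _
    | succ n ih =>
      set Kn : Submodule R ↥(Ek (n + 1)) :=
        Submodule.comap (Ek (n + 1)).subtype (Ek n) with hKn
      have hFKn : F ↥Kn :=
        tpFequiv (Submodule.comapSubtypeEquivOfLe (hEkmono (Nat.le_succ n))).symm ih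
      refine tpFext Kn hFKn ?_
      refine tpFdiv _ ?_ ?_
      · -- killed by q
        intro r hr v
        obtain ⟨x, rfl⟩ := Submodule.Quotient.mk_surjective Kn v
        rw [← Submodule.Quotient.mk_smul, Submodule.Quotient.mk_eq_zero]
        show (Ek (n + 1)).subtype (r • x) ∈ Ek n
        rw [hEkmem]
        intro a ha
        have hmem : a * r ∈ (q ^ (n + 1) : Ideal R) := by
          rw [pow_succ]
          exact Ideal.mul_mem_mul ha hr
        have hx1 : (x : W) ∈ Ek (n + 1) := x.2
        rw [hEkmem] at hx1
        show a • (r • (x : W)) = 0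
        rw [smul_smul]
        exact hx1 _ hmem
      · -- s ∉ q acts injectively
        intro s hs v hsv
        obtain ⟨x, rfl⟩ := Submodule.Quotient.mk_surjective Kn v
        rw [← Submodule.Quotient.mk_smul, Submodule.Quotient.mk_eq_zero] at hsv
        rw [Submodule.Quotient.mk_eq_zero]
        have hsx : (s • (x : W)) ∈ Ek n := hsv
        rw [hEkmem] at hsx
        show (Ek (n + 1)).subtype x ∈ Ek n
        rw [hEkmem]
        intro a ha
        refine hsinjW s hs _ ?_
        rw [smul_comm]
        exact hsx a ha
  -- W is the direct limit of the Ek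
  haveI : IsDirected (ULift.{u} ℕ) (· ≤ ·) := by
    constructor
    intro i j
    refine ⟨⟨max i.down j.down⟩, ?_, ?_⟩
    · show i.down ≤ max i.down j.down
      exact le_max_left _ _
    · show j.down ≤ max i.down j.down
      exact le_max_right _ _
  haveI : DecidableEq (ULift.{u} ℕ) := Classical.decEq _
  haveI : Nonempty (ULift.{u} ℕ) := ⟨⟨0⟩⟩
  let G' : ULift.{u} ℕ → Type u := fun n => ↥(Ek n.down)
  have hle : ∀ {i j : ULift.{u} ℕ}, i ≤ j → Ek i.down ≤ Ek j.down := by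
    intro i j h
    exact hEkmono h
  let incl : ∀ i j : ULift.{u} ℕ, i ≤ j → G' i →ₗ[R] G' j := fun i j h =>
    Submodule.inclusion (hle h)
  haveI : DirectedSystem G' fun i j h => incl i j h := by
    constructor
    · intro i x
      rfl
    · intro i j k hij hjk x
      rfl
  let gs : ∀ i : ULift.{u} ℕ, G' i →ₗ[R] W := fun i => (Ek i.down).subtype
  have compat : ∀ (i j : ULift.{u} ℕ) (hij : i ≤ j) (x : G' i),
      gs j (incl i j hij x) = gs i x := fun i j hij x => rfl
  let lft := Module.DirectLimit.lift R (ULift.{u} ℕ) G' incl gs compat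
  have hinj : Function.Injective lft := by
    rw [← LinearMap.ker_eq_bot, LinearMap.ker_eq_bot']
    intro w hw
    obtain ⟨i, x, rfl⟩ := Module.DirectLimit.exists_of w
    rw [Module.DirectLimit.lift_of] at hw
    have : x = 0 := by
      ext
      exact hw
    rw [this, map_zero]
  have hsurj : Function.Surjective lft := by
    intro w
    obtain ⟨n, hn⟩ := hpow w
    have hwn : w ∈ Ek n := (hEkmem n w).mpr hn
    exact ⟨Module.DirectLimit.of R (ULift.{u} ℕ) G' incl ⟨n⟩ ⟨w, hwn⟩,
      Module.DirectLimit.lift_of _ _ _⟩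
  exact tpFequiv (LinearEquiv.ofBijective lft ⟨hinj, hsurj⟩)
    (hlim (ULift.{u} ℕ) G' incl (fun i => hFEk i.down))

end Aux4

open CategoryTheory

section Aux5

variable {R : Type u} [CommRing R]

/-- Existence of an injective essential extension of `R ⧸ q`. -/
theorem tp13_exists_injective_essential_ext (q : Ideal R) :
    ∃ (W : Type u) (_ : AddCommGroup W) (_ : Module R W) (ε : (R ⧸ q) →ₗ[R] W),
      Function.Injective ε ∧
      (∀ w : W, w ≠ 0 → ∃ r : R, r • w ≠ 0 ∧ r • w ∈ LinearMap.range ε) ∧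
      (∀ (X Y : Type u) (_ : AddCommGroup X) (_ : AddCommGroup Y) (_ : Module R X)
        (_ : Module R Y) (i : X →ₗ[R] Y), Function.Injective i →
        ∀ h : X →ₗ[R] W, ∃ g : Y →ₗ[R] W, g.comp i = h) := by
  classical
  let A := ModuleCat.of R (R ⧸ q)
  let Q₀ := Injective.under A
  haveI : Injective Q₀ := Injective.injective_under A
  let ι₀ : A ⟶ Q₀ := Injective.ι A
  have hι₀inj : Function.Injective ι₀ := (ModuleCat.mono_iff_injective ι₀).mp inferInstance
  -- the extension property of Q₀
  have extQ : ∀ (X Y : Type u) (_ : AddCommGroup X) (_ : AddCommGroup Y) (_ : Module R X)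
      (_ : Module R Y) (i : X →ₗ[R] Y), Function.Injective i →
      ∀ h : X →ₗ[R] ↑Q₀, ∃ g : Y →ₗ[R] ↑Q₀, g.comp i = h := by
    intro X Y _ _ _ _ i hi h
    let iC : ModuleCat.of R X ⟶ ModuleCat.of R Y := ModuleCat.ofHom i
    haveI : Mono iC := (ModuleCat.mono_iff_injective iC).mpr hi
    exact ⟨(Injective.factorThru (show ModuleCat.of R X ⟶ Q₀ from ModuleCat.ofHom h) iC).hom,
      congrArg ModuleCat.Hom.hom (Injective.comp_factorThru _ iC)⟩
  let ι₀l : (R ⧸ q) →ₗ[R] ↑Q₀ := ι₀.hom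
  set X₀ : Submodule R ↑Q₀ := LinearMap.range ι₀l with hX₀
  -- Zorn 1 : maximal essential extension E of X₀ inside Q₀
  set S : Set (Submodule R ↑Q₀) :=
    {W | X₀ ≤ W ∧ ∀ w ∈ W, w ≠ 0 → ∃ r : R, r • w ≠ 0 ∧ r • w ∈ X₀} with hS
  have hX₀S : X₀ ∈ S := by
    refine ⟨le_rfl, fun w hw hw0 => ⟨1, ?_, ?_⟩⟩
    · rw [one_smul]; exact hw0
    · rw [one_smul]; exact hw
  have hchain : ∀ c ⊆ S, IsChain (· ≤ ·) c → ∀ y ∈ c, ∃ ub ∈ S, ∀ z ∈ c, z ≤ ub := by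
    intro c hcS hc y hyc
    haveI : Nonempty ↥c := ⟨⟨y, hyc⟩⟩
    have hdir : Directed (· ≤ ·) (fun i : c => (i : Submodule R ↑Q₀)) :=
      directedOn_iff_directed.mp hc.directedOn
    have hmem : ∀ x : ↑Q₀, x ∈ sSup c ↔ ∃ i : c, x ∈ (i : Submodule R ↑Q₀) := by
      intro x
      rw [sSup_eq_iSup']
      exact Submodule.mem_iSup_of_directed _ hdir
    refine ⟨sSup c, ⟨?_, ?_⟩, fun z hz => le_sSup hz⟩
    · exact le_trans (hcS hyc).1 (le_sSup hyc)
    · intro w hw hw0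
      obtain ⟨i, hi⟩ := (hmem w).mp hw
      exact (hcS i.2).2 w hi hw0
  obtain ⟨E, hX₀leE, hESmax⟩ := zorn_le_nonempty₀ S hchain X₀ hX₀S
  have hES : E ∈ S := hESmax.1
  -- Zorn 2 : maximal complement C of E
  set S₂ : Set (Submodule R ↑Q₀) := {C | C ⊓ E = ⊥} with hS₂
  have hchain₂ : ∀ c ⊆ S₂, IsChain (· ≤ ·) c → ∀ y ∈ c, ∃ ub ∈ S₂, ∀ z ∈ c, z ≤ ub := by
    intro c hcS hc y hyc
    haveI : Nonempty ↥c := ⟨⟨y, hyc⟩⟩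
    have hdir : Directed (· ≤ ·) (fun i : c => (i : Submodule R ↑Q₀)) :=
      directedOn_iff_directed.mp hc.directedOn
    refine ⟨sSup c, ?_, fun z hz => le_sSup hz⟩
    rw [hS₂, Set.mem_setOf_eq, eq_bot_iff]
    intro x hx
    obtain ⟨hx1, hx2⟩ := Submodule.mem_inf.mp hx
    rw [sSup_eq_iSup'] at hx1
    obtain ⟨i, hi⟩ := (Submodule.mem_iSup_of_directed _ hdir).mp hx1
    have : x ∈ (i : Submodule R ↑Q₀) ⊓ E := Submodule.mem_inf.mpr ⟨hi, hx2⟩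
    rw [hcS i.2] at this
    exact this
  obtain ⟨C, -, hCmax⟩ := zorn_le_nonempty₀ S₂ hchain₂ ⊥ (by simp [hS₂])
  have hCE : C ⊓ E = ⊥ := hCmax.1
  -- the quotient map
  set π : ↑Q₀ →ₗ[R] (↑Q₀ ⧸ C) := C.mkQ with hπ
  have hπker : ∀ x : ↑Q₀, π x = 0 ↔ x ∈ C := by
    intro x
    rw [hπ]
    exact Submodule.Quotient.mk_eq_zero C
  -- π is injective on E
  have hπEinj : ∀ w : ↑Q₀, w ∈ E → π w = 0 → w = 0 := by
    intro w hwE hw0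
    have : w ∈ C ⊓ E := Submodule.mem_inf.mpr ⟨(hπker w).mp hw0, hwE⟩
    rw [hCE] at this
    exact this
  -- essentiality of map π E in Q₀ ⧸ C, from maximality of C
  have hessπE : ∀ v : ↑Q₀ ⧸ C, v ≠ 0 → ∃ r : R, r • v ≠ 0 ∧ r • v ∈ Submodule.map π E := by
    intro v hv0
    obtain ⟨x, rfl⟩ := Submodule.Quotient.mk_surjective C v
    have hxC : x ∉ C := by
      intro hx
      exact hv0 ((hπker x).mpr hx)
    -- C ⊔ span x meets E nontrivially
    have hCx : ¬ ((C ⊔ Submodule.span R {x}) ⊓ E = ⊥) := by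
      intro hbot
      have hle : C ⊔ Submodule.span R {x} ≤ C := hCmax.2 hbot le_sup_left
      exact hxC (hle (Submodule.mem_sup_right (Submodule.mem_span_singleton_self x)))
    obtain ⟨w, hwmem, hw0⟩ := Submodule.exists_mem_ne_zero_of_ne_bot hCx
    obtain ⟨hw1, hwE⟩ := Submodule.mem_inf.mp hwmem
    obtain ⟨cc, hcc, z, hz, hwsum⟩ := Submodule.mem_sup.mp hw1
    obtain ⟨r, rfl⟩ := Submodule.mem_span_singleton.mp hz
    have hπw : π w = r • (Submodule.Quotient.mk x : ↑Q₀ ⧸ C) := by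
      rw [← hwsum, map_add, map_smul, (hπker cc).mpr hcc, zero_add]
      rfl
    refine ⟨r, ?_, ?_⟩
    · intro h0
      have : π w = 0 := by rw [hπw, h0]
      exact hw0 (hπEinj w hwE this)
    · exact ⟨w, hwE, hπw⟩
  -- build θ : Q₀ ⧸ C → Q₀ extending the inverse of π on E
  set e : ↥E →ₗ[R] (↑Q₀ ⧸ C) := π.comp E.subtype with he
  have heinj : Function.Injective e := by
    intro a b hab
    have : ((a : ↑Q₀) - b) ∈ E := by
      exact sub_mem a.2 b.2
    have h0 : π ((a : ↑Q₀) - b) = 0 := by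
      rw [map_sub]
      rw [show π (a : ↑Q₀) = e a from rfl, show π (b : ↑Q₀) = e b from rfl, hab, sub_self]
    have := hπEinj _ this h0
    exact Subtype.ext (sub_eq_zero.mp this)
  let eeq : ↥E ≃ₗ[R] ↥(LinearMap.range e) := LinearEquiv.ofInjective e heinj
  obtain ⟨θ, hθ⟩ := extQ ↥(LinearMap.range e) (↑Q₀ ⧸ C) _ _ _ _
    (LinearMap.range e).subtype Subtype.val_injective (E.subtype.comp eeq.symm.toLinearMap)
  -- θ (π w) = w for w ∈ E
  have hθπ : ∀ w : ↥E, θ (e w) = (w : ↑Q₀) := by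
    intro w
    have h1 : e w = (LinearMap.range e).subtype (eeq w) := rfl
    rw [h1]
    have := LinearMap.congr_fun hθ (eeq w)
    simp only [LinearMap.coe_comp, Function.comp_apply] at this
    rw [this]
    simp only [LinearMap.coe_comp, Function.comp_apply, LinearEquiv.coe_coe]
    rw [show eeq.symm (eeq w) = w from eeq.symm_apply_apply w]
    rfl
  have hθinj : Function.Injective θ := by
    rw [← LinearMap.ker_eq_bot, LinearMap.ker_eq_bot']
    intro v hv
    by_contra hv0
    obtain ⟨r, hrv0, hrv⟩ := hessπE v hv0
    obtain ⟨w, hwE, hwv⟩ := hrv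
    have h1 : θ (r • v) = 0 := by rw [map_smul, hv, smul_zero]
    have h2 : θ (r • v) = w := by
      rw [← hwv]
      exact hθπ ⟨w, hwE⟩
    have hw0 : w = 0 := by rw [← h2, h1]
    apply hrv0
    rw [← hwv, hw0, map_zero]
  -- range θ is an essential extension of X₀ containing E, hence equals E
  have hrangeS : LinearMap.range θ ∈ S := by
    constructor
    · intro x hx
      have hxE : x ∈ E := hX₀leE hx
      exact ⟨e ⟨x, hxE⟩, hθπ ⟨x, hxE⟩⟩
    · intro w hw hw0
      obtain ⟨v, rfl⟩ := hw
      have hv0 : v ≠ 0 := by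
        intro h
        rw [h, map_zero] at hw0
        exact hw0 rfl
      obtain ⟨r, hrv0, hrv⟩ := hessπE v hv0
      obtain ⟨w', hw'E, hw'v⟩ := hrv
      have hθrv : θ (r • v) = w' := by
        rw [← hw'v]
        exact hθπ ⟨w', hw'E⟩
      have hw'0 : w' ≠ 0 := by
        intro h
        rw [h] at hθrv
        exact hrv0 (hθinj (by rw [hθrv, map_zero]))
      obtain ⟨r', hr'0, hr'X₀⟩ := hES.2 w' hw'E hw'0
      refine ⟨r' * r, ?_, ?_⟩
      · rw [mul_smul, ← map_smul θ, hθrv]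
        exact hr'0
      · rw [mul_smul, ← map_smul θ, hθrv]
        exact hr'X₀
  have hEleRange : E ≤ LinearMap.range θ := by
    intro x hx
    exact ⟨e ⟨x, hx⟩, hθπ ⟨x, hx⟩⟩
  have hrangeE : LinearMap.range θ = E :=
    le_antisymm (hESmax.2 hrangeS hEleRange) hEleRange
  -- hence map π E = ⊤
  have hπEtop : Submodule.map π E = ⊤ := by
    rw [eq_top_iff]
    intro v _
    have hθv : θ v ∈ E := hrangeE ▸ LinearMap.mem_range_self θ v
    have : θ (e ⟨θ v, hθv⟩) = θ v := hθπ ⟨θ v, hθv⟩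
    have hve : v = e ⟨θ v, hθv⟩ := (hθinj this).symm
    exact ⟨θ v, hθv, hve.symm⟩
  -- E and C are complementary
  have hcompl : IsCompl E C := by
    constructor
    · rw [disjoint_iff]
      rw [inf_comm]
      exact hCE
    · rw [codisjoint_iff, eq_top_iff]
      intro x _
      have : π x ∈ Submodule.map π E := hπEtop ▸ Submodule.mem_top
      obtain ⟨w, hwE, hwx⟩ := this
      have : x - w ∈ C := by
        rw [← hπker]
        rw [map_sub, hwx, sub_self]
      have hx : x = w + (x - w) := by abel
      rw [hx]
      exact Submodule.add_mem_sup hwE this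
  set pr : ↑Q₀ →ₗ[R] ↥E := E.linearProjOfIsCompl C hcompl with hpr
  have hprE : ∀ w : ↥E, pr (w : ↑Q₀) = w := fun w =>
    Submodule.linearProjOfIsCompl_apply_left hcompl w
  -- now assemble: W := ↥E
  refine ⟨↥E, inferInstance, inferInstance, LinearMap.codRestrict E ι₀l
    (fun x => hX₀leE ⟨x, rfl⟩), ?_, ?_, ?_⟩
  · intro a b hab
    apply hι₀inj
    exact congrArg Subtype.val hab
  · intro w hw0
    have hwv0 : (w : ↑Q₀) ≠ 0 := fun h => hw0 (Subtype.ext h)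
    obtain ⟨r, hr0, hrX₀⟩ := hES.2 (w : ↑Q₀) w.2 hwv0
    refine ⟨r, ?_, ?_⟩
    · intro h
      apply hr0
      have : ((r • w : ↥E) : ↑Q₀) = 0 := by rw [h]; rfl
      exact this
    · obtain ⟨c, hc⟩ := hrX₀
      exact ⟨c, Subtype.ext hc⟩
  · intro X Y _ _ _ _ i hi h
    obtain ⟨g0, hg0⟩ := extQ X Y _ _ _ _ i hi (E.subtype.comp h)
    refine ⟨pr.comp g0, ?_⟩
    refine LinearMap.ext fun x => ?_
    show pr (g0 (i x)) = h x
    have : g0 (i x) = E.subtype (h x) := LinearMap.congr_fun hg0 x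
    rw [this]
    exact hprE (h x)

end Aux5

section Aux6

variable {R : Type u} [CommRing R]
variable (T F : ∀ (M : Type u) [AddCommGroup M] [Module R M], Prop)
variable
    (hF : ∀ (M : Type u) [AddCommGroup M] [Module R M],
      F M ↔ ∀ (N : Type u) [AddCommGroup N] [Module R N], T N → ∀ f : N →ₗ[R] M, f = 0)
    (hT : ∀ (M : Type u) [AddCommGroup M] [Module R M],
      T M ↔ ∀ (N : Type u) [AddCommGroup N] [Module R N], F N → ∀ f : M →ₗ[R] N, f = 0)

include hF hT in
theorem tp13_hereditary_of_finiteType [IsNoetherianRing R]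
    (hlim : ∀ (ι : Type u) [Preorder ι] [IsDirected ι (· ≤ ·)] [DecidableEq ι]
      (G : ι → Type u) [∀ i, AddCommGroup (G i)] [∀ i, Module R (G i)]
      (f : ∀ i j, i ≤ j → G i →ₗ[R] G j) [DirectedSystem G fun i j h => f i j h],
      (∀ i, F (G i)) → F (Module.DirectLimit G f))
    (M : Type u) [AddCommGroup M] [Module R M] (N : Submodule R M) (hTM : T M) : T ↥N := by
  classical
  rw [hT]
  intro Y _ _ hFY f
  ext n
  show f n = 0
  by_contra hx
  -- the annihilators
  set J : Ideal R := Ideal.torsionOf R M (n : M) with hJ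
  set K₀ : Ideal R := Ideal.torsionOf R Y (f n) with hK₀
  have hJK : J ≤ K₀ := by
    intro r hr
    rw [hJ, Ideal.mem_torsionOf_iff] at hr
    rw [hK₀, Ideal.mem_torsionOf_iff, ← map_smul]
    have : r • n = 0 := Subtype.ext hr
    rw [this, map_zero]
  have hK₀top : K₀ ≠ ⊤ := by
    intro h
    apply hx
    have : (1 : R) ∈ K₀ := h ▸ Submodule.mem_top
    rw [hK₀, Ideal.mem_torsionOf_iff, one_smul] at this
    exact this
  have hFK₀ : F (R ⧸ K₀) := by
    refine tp13_F_of_inj T F hF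
      ((LinearMap.range (LinearMap.toSpanSingleton R Y (f n))).subtype.comp
        (LinearMap.toSpanSingleton R Y (f n)).quotKerEquivRange.toLinearMap) ?_ hFY
    exact Subtype.val_injective.comp (LinearMap.quotKerEquivRange _).injective
  -- pick a maximal member of the family of "bad" ideals
  set B : Set (Ideal R) := {K | K ≠ ⊤ ∧ J ≤ K ∧ F (R ⧸ K)} with hB
  have hK₀B : K₀ ∈ B := ⟨hK₀top, hJK, hFK₀⟩
  have hwf : WellFounded ((· > ·) : Ideal R → Ideal R → Prop) := IsWellFounded.wf
  obtain ⟨q, hqB, hqmax⟩ := hwf.has_min B ⟨K₀, hK₀B⟩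
  -- q is prime
  have hmulmem : ∀ {a b : R}, a * b ∈ q → a ∈ q ∨ b ∈ q := by
    intro a b hab
    by_contra hcon
    push_neg at hcon
    obtain ⟨ha, hb⟩ := hcon
    haveI : Nontrivial (R ⧸ q) := Ideal.Quotient.nontrivial_iff.mpr hqB.1
    set K' : Ideal R := Ideal.torsionOf R (R ⧸ q) (Ideal.Quotient.mk q b) with hK'
    have hmem' : ∀ r : R, r ∈ K' ↔ r * b ∈ q := by
      intro r
      rw [hK', Ideal.mem_torsionOf_iff]
      rw [show r • (Ideal.Quotient.mk q b) = Ideal.Quotient.mk q (r * b) by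
        rw [Algebra.smul_def, Ideal.Quotient.algebraMap_eq, ← map_mul]]
      exact Ideal.Quotient.eq_zero_iff_mem
    have hqK' : q ≤ K' := by
      intro r hr
      rw [hmem']
      exact Ideal.mul_mem_right b q hr
    have hK'B : K' ∈ B := by
      refine ⟨?_, le_trans (le_trans hqB.2.1 hqK') le_rfl, ?_⟩
      · intro h
        have : (1 : R) ∈ K' := h ▸ Submodule.mem_top
        rw [hmem', one_mul] at this
        exact hb this
      · refine tp13_F_of_inj T F hF
          ((LinearMap.range (LinearMap.toSpanSingleton R (R ⧸ q)
              (Ideal.Quotient.mk q b))).subtype.comp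
            (LinearMap.toSpanSingleton R (R ⧸ q)
              (Ideal.Quotient.mk q b)).quotKerEquivRange.toLinearMap) ?_ hqB.2.2
        exact Subtype.val_injective.comp (LinearMap.quotKerEquivRange _).injective
    have haK' : a ∈ K' := by
      rw [hmem']
      exact hab
    have : K' > q := lt_of_le_of_ne hqK' (by
      intro h
      rw [← h] at haK'
      exact ha haK')
    exact hqmax K' hK'B this
  haveI hqprime : q.IsPrime := ⟨hqB.1, hmulmem⟩
  haveI : Nontrivial (R ⧸ q) := Ideal.Quotient.nontrivial_iff.mpr hqB.1
  -- the injective essential extension of R ⧸ q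
  obtain ⟨W, instW1, instW2, ε, hεinj, hess, hext⟩ := tp13_exists_injective_essential_ext q
  have hFW : F W :=
    tp13_F_of_essential_ext F (tp13_F_equiv T F hF) (tp13_F_subsingleton T F hF)
      (tp13_F_ext T F hF) hlim q hqB.2.2
      (tp13_F_of_divisible F (tp13_F_of_inj T F hF) (tp13_F_pi T F hF) q
        (tp13_F_fractionRing F (tp13_F_equiv T F hF) hlim q hqB.2.2))
      W ε hεinj hess
  -- the map from the cyclic submodule generated by n into W
  set Rn : Submodule R M := LinearMap.range (LinearMap.toSpanSingleton R M (n : M)) with hRn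
  set eqv : (R ⧸ J) ≃ₗ[R] ↥Rn :=
    (LinearMap.toSpanSingleton R M (n : M)).quotKerEquivRange with heqv
  set fac : (R ⧸ J) →ₗ[R] (R ⧸ q) := Submodule.mapQ J q LinearMap.id hqB.2.1 with hfac
  set h₁ : ↥Rn →ₗ[R] W := (ε.comp fac).comp eqv.symm.toLinearMap with hh₁
  obtain ⟨g, hg⟩ := hext ↥Rn M _ _ _ _ Rn.subtype Subtype.val_injective h₁
  have hg0 : g = 0 := (hF W).mp hFW M hTM g
  -- evaluate at n
  have hnmem : (n : M) ∈ Rn := ⟨1, by rw [LinearMap.toSpanSingleton_apply, one_smul]⟩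
  have heval : h₁ ⟨(n : M), hnmem⟩ = ε (Ideal.Quotient.mk q 1) := by
    have h1 : eqv (Submodule.Quotient.mk (1 : R)) = ⟨(n : M), hnmem⟩ := by
      apply Subtype.ext
      rw [heqv]
      show ((LinearMap.toSpanSingleton R M (n : M)).quotKerEquivRange
        (Submodule.Quotient.mk (1 : R)) : M) = (n : M)
      rw [LinearMap.quotKerEquivRange_apply_mk, LinearMap.toSpanSingleton_apply, one_smul]
    have h2 : eqv.symm ⟨(n : M), hnmem⟩ = Submodule.Quotient.mk (1 : R) := by
      rw [← h1, LinearEquiv.symm_apply_apply]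
    rw [hh₁]
    simp only [LinearMap.coe_comp, Function.comp_apply, LinearEquiv.coe_coe]
    rw [h2]
    rw [hfac, Submodule.mapQ_apply]
    rfl
  have hεne : ε (Ideal.Quotient.mk q 1) ≠ 0 := by
    intro h
    have h1 : (Ideal.Quotient.mk q 1 : R ⧸ q) = 0 := by
      apply hεinj
      rw [h, map_zero]
    rw [map_one] at h1
    exact one_ne_zero h1
  apply hεne
  rw [← heval]
  have : g (Rn.subtype ⟨(n : M), hnmem⟩) = h₁ ⟨(n : M), hnmem⟩ := LinearMap.congr_fun hg _
  rw [← this, hg0]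
  rfl

end Aux6

/-- Over a commutative noetherian ring, a torsion pair is of finite type (the
torsion-free class is closed under direct limits of directed systems) iff it is
hereditary (the torsion class is closed under submodules). -/
theorem stmt_13 {R : Type u} [CommRing R] [IsNoetherianRing R]
    (T F : ∀ (M : Type u) [AddCommGroup M] [Module R M], Prop)
    -- torsion pair:
    (hF : ∀ (M : Type u) [AddCommGroup M] [Module R M],
      F M ↔ ∀ (N : Type u) [AddCommGroup N] [Module R N], T N → ∀ f : N →ₗ[R] M, f = 0)
    (hT : ∀ (M : Type u) [AddCommGroup M] [Module R M],
      T M ↔ ∀ (N : Type u) [AddCommGroup N] [Module R N], F N → ∀ f : M →ₗ[R] N, f = 0) :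
    (∀ (ι : Type u) [Preorder ι] [IsDirected ι (· ≤ ·)] [DecidableEq ι]
      (G : ι → Type u) [∀ i, AddCommGroup (G i)] [∀ i, Module R (G i)]
      (f : ∀ i j, i ≤ j → G i →ₗ[R] G j) [DirectedSystem G fun i j h => f i j h],
      (∀ i, F (G i)) → F (Module.DirectLimit G f)) ↔
    (∀ (M : Type u) [AddCommGroup M] [Module R M] (N : Submodule R M), T M → T N) := by
  constructor
  · intro hlim M _ _ N hTM
    exact tp13_hereditary_of_finiteType T F hF hT hlim M N hTM
  · intro hHer ι _ _ _ G _ _ f _ hFG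
    exact tp13_finiteType_of_hereditary T F hF hT hHer ι G f hFG
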